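/- Let λ ∈ (0, 1) and let θ ∈ ℝ satisfy cos θ = √λ and sin θ = √(1 − λ). Let N ≥ 1 and let (y_k)_{k≥0} and (l_k)_{k≥1} be sequences of vectors in ℝ^N with y_0 = 0 and y_{k+1} = λ(2y_k − y_{k−1} + l_k) for all k ≥ 1. Then for every k ≥ 0, y_{k+1} = (λ^{k/2} · sin((k+1)θ)/sin θ) · y_1 + λ · Σ_{s=1}^{k} (λ^{(k−s)/2} · sin((k+1−s)θ)/sin θ) · l_s. -/

import Mathlib

open Finset

theorem stmt_7 (lam : ℝ) (hlam : lam ∈ Set.Ioo (0 : ℝ) 1)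
    (θ : ℝ) (hcos : Real.cos θ = Real.sqrt lam) (hsin : Real.sin θ = Real.sqrt (1 - lam))
    (N : ℕ) (hN : 1 ≤ N)
    (y : ℕ → EuclideanSpace ℝ (Fin N)) (l : ℕ → EuclideanSpace ℝ (Fin N))
    (hy0 : y 0 = 0)
    (hrec : ∀ k, 1 ≤ k → y (k + 1) = lam • ((2 : ℝ) • y k - y (k - 1) + l k))
    (k : ℕ) :
    y (k + 1) = ((Real.sqrt lam) ^ k * Real.sin ((k + 1) * θ) / Real.sin θ) • y 1 +
      lam • ∑ s ∈ Finset.Icc 1 k,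
        ((Real.sqrt lam) ^ (k - s) * Real.sin (((k + 1 - s : ℕ) : ℝ) * θ) / Real.sin θ) • l s := by
  obtain ⟨hl0, hl1⟩ := hlam
  have hsinθ : Real.sin θ ≠ 0 := by
    rw [hsin]
    exact ne_of_gt (Real.sqrt_pos.mpr (by linarith))
  have hsq : Real.sqrt lam ^ 2 = lam := Real.sq_sqrt hl0.le
  set c : ℕ → ℝ := fun n => Real.sqrt lam ^ n * Real.sin (((n : ℝ) + 1) * θ) / Real.sin θ
    with hcdef
  have hc0 : c 0 = 1 := by
    simp [hcdef, div_self hsinθ]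
  have hc1 : c 1 = 2 * lam := by
    have h2 : ((1 : ℝ) + 1) * θ = θ + θ := by ring
    simp only [hcdef, Nat.cast_one, pow_one, h2, Real.sin_add]
    rw [hcos]
    field_simp
    linear_combination 2 * hsq
  have hcrec : ∀ n : ℕ, c (n + 2) = 2 * lam * c (n + 1) - lam * c n := by
    intro n
    have htrig : Real.sin ((((n : ℝ) + 2) + 1) * θ) =
        2 * Real.cos θ * Real.sin ((((n : ℝ) + 1) + 1) * θ) - Real.sin (((n : ℝ) + 1) * θ) := by
      have e1 : (((n : ℝ) + 2) + 1) * θ = (((n : ℝ) + 1) + 1) * θ + θ := by ring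
      have e2 : ((n : ℝ) + 1) * θ = (((n : ℝ) + 1) + 1) * θ - θ := by ring
      rw [e1, e2, Real.sin_add, Real.sin_sub]
      ring
    have p1 : Real.sqrt lam ^ (n + 2) = Real.sqrt lam ^ n * lam := by
      rw [pow_add, hsq]
    have p2 : Real.sqrt lam ^ (n + 1) = Real.sqrt lam ^ n * Real.sqrt lam := by
      rw [pow_succ]
    simp only [hcdef, Nat.cast_add, Nat.cast_ofNat, Nat.cast_one, htrig, hcos, p1, p2]
    field_simp
  have hmain : ∀ m : ℕ, y (m + 1) = c m • y 1 + lam • ∑ s ∈ Finset.Icc 1 m, c (m - s) • l s := by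
    intro m
    induction m using Nat.twoStepInduction with
    | zero =>
      simp [hc0]
    | one =>
      have h := hrec 1 le_rfl
      rw [h, hy0, hc1]
      simp only [Finset.Icc_self, Finset.sum_singleton, Nat.sub_self, hc0, one_smul]
      module
    | more n ih1 ih2 =>
      have h := hrec (n + 2) (by omega)
      have hn2 : n + 2 - 1 = n + 1 := by omega
      rw [hn2] at h
      rw [h, ih1, ih2]
      rw [Finset.sum_Icc_succ_top (by omega : 1 ≤ n + 2),
        Finset.sum_Icc_succ_top (by omega : 1 ≤ n + 1),
        Finset.sum_Icc_succ_top (by omega : 1 ≤ n + 1)]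
      have e1 : n + 2 - (n + 2) = 0 := by omega
      have e2 : n + 2 - (n + 1) = 1 := by omega
      have e3 : n + 1 - (n + 1) = 0 := by omega
      rw [e1, e2, e3, hc0, hc1]
      have hsum : ∑ s ∈ Finset.Icc 1 n, c (n + 2 - s) • l s =
          (2 * lam) • (∑ s ∈ Finset.Icc 1 n, c (n + 1 - s) • l s)
            - lam • (∑ s ∈ Finset.Icc 1 n, c (n - s) • l s) := by
        rw [Finset.smul_sum, Finset.smul_sum, ← Finset.sum_sub_distrib]
        refine Finset.sum_congr rfl fun s hs => ?_
        have hs' : s ≤ n := (Finset.mem_Icc.mp hs).2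
        have h1 : n + 2 - s = (n - s) + 2 := by omega
        have h2 : n + 1 - s = (n - s) + 1 := by omega
        rw [h1, h2, hcrec, smul_smul, smul_smul, ← sub_smul, sub_smul]
      rw [hsum, hcrec]
      module
  rw [hmain k]
  congr 2
  refine Finset.sum_congr rfl fun s hs => ?_
  have hs' : s ≤ k := (Finset.mem_Icc.mp hs).2
  have h1 : k + 1 - s = (k - s) + 1 := by omega
  rw [h1]
  simp [hcdef]
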